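/- The real number c = cos(π/7) satisfies 8*c^3 - 4*c^2 - 4*c + 1 = 0; equivalently, sec(π/7) = 1/cos(π/7) is a root of the polynomial x^3 - 4*x^2 - 4*x + 8. Moreover, every complex root of x^3 - 4*x^2 - 4*x + 8 other than sec(π/7) has absolute value strictly greater than sec(π/7), and sec(π/7) < √2, so sec(π/7) is the pole of smallest modulus of the rational function x^5*(4-x^3)/(3*(x^2-2)^2*(x^3-4*x^2-4*x+8)). -/

import Mathlib

lemma cos7_cubic : 8 * Real.cos (Real.pi / 7) ^ 3 - 4 * Real.cos (Real.pi / 7) ^ 2 -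
    4 * Real.cos (Real.pi / 7) + 1 = 0 := by
  set x := Real.pi / 7 with hx
  set c := Real.cos x with hc
  have h7 : Real.cos (7 * x) = -1 := by
    rw [hx, show 7 * (Real.pi / 7) = Real.pi by ring, Real.cos_pi]
  have hsum : Real.cos (7 * x) + Real.cos x = 2 * Real.cos (4 * x) * Real.cos (3 * x) := by
    have h := Real.cos_add_cos (7 * x) x
    rw [show (7 * x + x) / 2 = 4 * x by ring, show (7 * x - x) / 2 = 3 * x by ring] at h
    exact h
  have h2 : Real.cos (2 * x) = 2 * c ^ 2 - 1 := Real.cos_two_mul x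
  have h4 : Real.cos (4 * x) = 2 * (2 * c ^ 2 - 1) ^ 2 - 1 := by
    rw [show (4 : ℝ) * x = 2 * (2 * x) by ring, Real.cos_two_mul, h2]
  have h3 : Real.cos (3 * x) = 4 * c ^ 3 - 3 * c := Real.cos_three_mul x
  rw [h7, h4, h3] at hsum
  have hkey : (c + 1) * (8 * c ^ 3 - 4 * c ^ 2 - 4 * c + 1) ^ 2 = 0 := by nlinarith [hsum]
  have hcpos : 0 < c := by
    rw [hc, hx]
    apply Real.cos_pos_of_mem_Ioo
    constructor <;> nlinarith [Real.pi_pos]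
  rcases mul_eq_zero.1 hkey with h | h
  · nlinarith
  · exact pow_eq_zero_iff (two_ne_zero) |>.1 h

lemma cos7_lb' : (0.86 : ℝ) < Real.cos (Real.pi / 7) := by
  have h : Real.cos (Real.pi / 6) < Real.cos (Real.pi / 7) := by
    apply Real.cos_lt_cos_of_nonneg_of_le_pi
    · positivity
    · nlinarith [Real.pi_pos]
    · nlinarith [Real.pi_pos]
  rw [Real.cos_pi_div_six] at h
  have : (1.72 : ℝ) < Real.sqrt 3 := by
    nlinarith [Real.sq_sqrt (by norm_num : (3:ℝ) ≥ 0), Real.sqrt_nonneg 3]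
  linarith

theorem sec_pi_div_seven_smallest_pole :
    (8 * Real.cos (Real.pi / 7) ^ 3 - 4 * Real.cos (Real.pi / 7) ^ 2 -
        4 * Real.cos (Real.pi / 7) + 1 = 0) ∧
    ((1 / Real.cos (Real.pi / 7)) ^ 3 - 4 * (1 / Real.cos (Real.pi / 7)) ^ 2 -
        4 * (1 / Real.cos (Real.pi / 7)) + 8 = 0) ∧
    (∀ z : ℂ, z ^ 3 - 4 * z ^ 2 - 4 * z + 8 = 0 →
        z ≠ ((1 / Real.cos (Real.pi / 7) : ℝ) : ℂ) →
        1 / Real.cos (Real.pi / 7) < ‖z‖) ∧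
    (1 / Real.cos (Real.pi / 7) < Real.sqrt 2) ∧
    (∀ z : ℂ, 3 * (z ^ 2 - 2) ^ 2 * (z ^ 3 - 4 * z ^ 2 - 4 * z + 8) = 0 →
        z ≠ ((1 / Real.cos (Real.pi / 7) : ℝ) : ℂ) →
        1 / Real.cos (Real.pi / 7) < ‖z‖) := by
  have h1 := cos7_cubic
  set c := Real.cos (Real.pi / 7) with hc
  have hclb := cos7_lb'
  have hcub : c ≤ 1 := Real.cos_le_one _
  have hcpos : (0 : ℝ) < c := by linarith
  have hcne : c ≠ 0 := ne_of_gt hcpos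
  set s : ℝ := 1 / c with hs
  -- bounds on s
  have hs1 : 1 ≤ s := by rw [hs, le_div_iff₀ hcpos]; linarith
  have hs2 : s < 1.17 := by rw [hs, div_lt_iff₀ hcpos]; nlinarith
  have hspos : 0 < s := by linarith
  -- s is a root of the cubic
  have h2 : s ^ 3 - 4 * s ^ 2 - 4 * s + 8 = 0 := by
    rw [hs]
    field_simp
    linear_combination h1
  -- the key root-separation fact
  have h3 : ∀ z : ℂ, z ^ 3 - 4 * z ^ 2 - 4 * z + 8 = 0 → z ≠ (s : ℂ) →
      s < ‖z‖ := by
    intro z hz hne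
    have hsC : (s : ℂ) ^ 3 - 4 * (s : ℂ) ^ 2 - 4 * (s : ℂ) + 8 = 0 := by
      have := congrArg (Complex.ofReal) h2
      push_cast at this
      convert this using 1 <;> push_cast <;> ring
    have hfac : (z - (s : ℂ)) * (z ^ 2 + z * (s : ℂ) + (s : ℂ) ^ 2 - 4 * z
        - 4 * (s : ℂ) - 4) = 0 := by linear_combination hz - hsC
    have hq : z ^ 2 + z * (s : ℂ) + (s : ℂ) ^ 2 - 4 * z - 4 * (s : ℂ) - 4 = 0 := by
      rcases mul_eq_zero.1 hfac with h | h
      · exact absurd (sub_eq_zero.1 h) hne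
      · exact h
    set a := z.re with ha
    set b := z.im with hb
    rw [Complex.ext_iff] at hq
    simp [Complex.mul_re, Complex.mul_im, pow_two] at hq
    obtain ⟨hre, him⟩ := hq
    rw [← ha, ← hb] at hre him
    have him' : b * (2 * a + s - 4) = 0 := by linear_combination him
    rcases mul_eq_zero.1 him' with hb0 | hlin
    · -- z is real
      have hzeq : z = ((a : ℝ) : ℂ) := Complex.ext rfl (by simpa using hb0)
      rw [hzeq, Complex.norm_real, Real.norm_eq_abs]
      by_contra hcon
      push_neg at hcon
      obtain ⟨ha1, ha2⟩ := abs_le.1 hcon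
      rw [hb0] at hre
      nlinarith [mul_nonneg (by linarith : (0:ℝ) ≤ s - a) (by linarith : (0:ℝ) ≤ s + a),
        mul_nonneg (by linarith : (0:ℝ) ≤ 4 - s) (by linarith : (0:ℝ) ≤ a + s)]
    · -- impossible: would give negative |z|^2
      exfalso
      have hbne : b ≠ 0 := by
        intro hb0
        apply hne
        apply Complex.ext
        · show a = s
          rw [hb0] at hre
          nlinarith [mul_nonneg (by nlinarith : (0:ℝ) ≤ s - a) (by nlinarith : (0:ℝ) ≤ s + a)]
        · simpa using hb0
      have hbb : 0 < b ^ 2 := by positivity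
      nlinarith [hre, hlin, hbb]
  have h4 : s < Real.sqrt 2 := by
    nlinarith [Real.sq_sqrt (by norm_num : (2:ℝ) ≥ 0), Real.sqrt_nonneg 2]
  refine ⟨h1, h2, h3, h4, ?_⟩
  intro z hz hne
  rcases mul_eq_zero.1 hz with h | h
  · have hz2 : z ^ 2 = 2 := by
      have h' : (z ^ 2 - 2) ^ 2 = 0 := by
        rcases mul_eq_zero.1 h with h'' | h''
        · norm_num at h''
        · exact h''
      have := pow_eq_zero_iff (two_ne_zero) |>.1 h'
      linear_combination this
    have habs : ‖z‖ = Real.sqrt 2 := by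
      have : ‖z‖ ^ 2 = 2 := by
        rw [← norm_pow, hz2]
        simp
      nlinarith [Real.sq_sqrt (by norm_num : (2:ℝ) ≥ 0), Real.sqrt_nonneg 2,
        norm_nonneg z]
    rw [habs]; exact h4
  · exact h3 z h hne
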